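/- The shift S'_semi-mirror, consisting of the configurations of the semi-mirror shift in which the two half-planes differ in at most one pair of symmetric positions, is not sofic. -/

import Mathlib

/-- A cell of the two-dimensional grid `ℤ²`. -/
abbrev Cell : Type := ℤ × ℤ

/-- A configuration over the alphabet `A` is a map `ℤ² → A`. -/
abbrev Config (A : Type) : Type := Cell → A

/-- The translateCfg of a configuration `x` by `u` is `i ↦ x (i + u)`. -/
def translateCfg {A : Type} (u : Cell) (x : Config A) : Config A := fun i => x (i + u)

/-- The product topology on `A^(ℤ²)`, `A` being given the discrete topology. -/
def configTop (A : Type) : TopologicalSpace (Config A) :=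
  @Pi.topologicalSpace Cell (fun _ => A) (fun _ => ⊥)

/-- A shift (space) over `A`: a set of configurations invariant under all translations
and closed in the product topology (`A` discrete). -/
def IsShiftSpace {A : Type} (S : Set (Config A)) : Prop :=
  (∀ (u : Cell) (x : Config A), x ∈ S → translateCfg u x ∈ S) ∧
    @IsClosed (Config A) (configTop A) S

/-- A finite pattern: a function `P : F → A` with `F ⊆ ℤ²` finite. -/
structure Pattern (A : Type) where
  supp : Finset Cell
  val : supp → A

/-- `P` occurs in `x` if some translateCfg of `x` agrees with `P` on its support. -/
def Pattern.OccursIn {A : Type} (P : Pattern A) (x : Config A) : Prop :=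
  ∃ u : Cell, ∀ i : P.supp, x ((i : Cell) + u) = P.val i

/-- The shift defined by a set `F` of forbidden finite patterns. -/
def shiftOf {A : Type} (F : Set (Pattern A)) : Set (Config A) :=
  { x | ∀ P ∈ F, ¬ P.OccursIn x }

/-- A shift of finite type: a shift definable by a finite set of forbidden finite patterns. -/
def IsSFT {A : Type} (S : Set (Config A)) : Prop :=
  ∃ F : Set (Pattern A), F.Finite ∧ S = shiftOf F

/-- A sofic shift: a coordinatewise projection of a shift of finite type
over some finite alphabet. -/
def IsSofic {A : Type} (S : Set (Config A)) : Prop :=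
  ∃ (A' : Type) (_ : Fintype A') (S' : Set (Config A')) (π : A' → A),
    IsSFT S' ∧ S = (fun y => π ∘ y) '' S'

/-- The cell of `ℤ²` corresponding to an index in the `n × n` square `{0,…,n−1}²`. -/
def toCell {n : ℕ} (q : Fin n × Fin n) : Cell := ((q.1 : ℤ), (q.2 : ℤ))

/-- An `n × n` square pattern, i.e. a pattern with support `B_n = {0,…,n−1}²`. -/
abbrev SqPattern (A : Type) (n : ℕ) : Type := Fin n × Fin n → A

/-- An `n × n` square pattern occurs in `x` if some translateCfg of `x` agrees with it. -/
def SqOccursIn {A : Type} {n : ℕ} (P : SqPattern A n) (x : Config A) : Prop :=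
  ∃ u : Cell, ∀ q : Fin n × Fin n, x (toCell q + u) = P q

/-- A pattern is globally admissible for `S` if it occurs in some configuration of `S`. -/
def SqGloballyAdmissible {A : Type} {n : ℕ} (S : Set (Config A)) (P : SqPattern A n) : Prop :=
  ∃ x ∈ S, SqOccursIn P x

/-- Membership in the square `B_n = {0,…,n−1}² ⊆ ℤ²`. -/
def inBn (n : ℕ) (p : Cell) : Prop :=
  0 ≤ p.1 ∧ p.1 < (n : ℤ) ∧ 0 ≤ p.2 ∧ p.2 < (n : ℤ)

instance (n : ℕ) (p : Cell) : Decidable (inBn n p) := by unfold inBn; infer_instance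

/-- A pattern on `F_n = ℤ² \ B_n`, the complement of the `n × n` square. -/
abbrev ExtPattern (A : Type) (n : ℕ) : Type := { p : Cell // ¬ inBn n p } → A

/-- The configuration `P ∪ Q`, equal to `P` on `B_n` and to `Q` on `F_n`. -/
def glue {A : Type} {n : ℕ} (P : SqPattern A n) (Q : ExtPattern A n) : Config A :=
  fun p =>
    if h : inBn n p then
      P (⟨p.1.toNat, by unfold inBn at h; omega⟩, ⟨p.2.toNat, by unfold inBn at h; omega⟩)
    else Q ⟨p, h⟩

/-- The extension set `Ext_S(P) = {Q : F_n → A | P ∪ Q ∈ S}`. -/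
def ExtSet {A : Type} {n : ℕ} (S : Set (Config A)) (P : SqPattern A n) :
    Set (ExtPattern A n) :=
  { Q | glue P Q ∈ S }

/-- A finite sequence of sets is an increasing-union chain if no set is contained in
the union of the preceding ones. -/
def IncreasingUnionChain {β : Type} {m : ℕ} (T : Fin m → Set β) : Prop :=
  ∀ i : Fin m, ¬ T i ⊆ ⋃ (j : Fin m) (_ : j < i), T j

/-- The three-letter alphabet of the semi-mirror shift. -/
inductive Letter : Type
  | black
  | white
  | red
deriving DecidableEq

/-- The shift `S'_semi-mirror`: configurations of the semi-mirror shift in which, moreover,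
the two half-planes differ in at most one pair of symmetric positions. -/
def semiMirrorShift' : Set (Config Letter) :=
  { x | (∀ p : Cell, x p ≠ Letter.red) ∨
        (∃ j0 : ℤ, (∀ i j : ℤ, x (i, j) = Letter.red ↔ j = j0) ∧
          (∀ (i k : ℤ), 1 ≤ k → x (i, j0 - k) = Letter.black → x (i, j0 + k) = Letter.black) ∧
          {q : ℤ × ℤ | 1 ≤ q.2 ∧ x (q.1, j0 - q.2) ≠ x (q.1, j0 + q.2)}.Subsingleton) }


namespace SemiMirrorProof

/-- The coding function: `true` on cells `(i,k)` with `0 ≤ i < N`, `1 ≤ k ≤ N`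
according to `w`, `false` elsewhere. -/
def code (N : ℕ) (w : Fin N × Fin N → Bool) (i k : ℤ) : Bool :=
  if h : 0 ≤ i ∧ i < (N : ℤ) ∧ 1 ≤ k ∧ k ≤ (N : ℤ) then
    w (⟨i.toNat, by omega⟩, ⟨(k - 1).toNat, by omega⟩)
  else false

lemma code_spec (N : ℕ) (w : Fin N × Fin N → Bool) (a : Fin N × Fin N) :
    code N w (a.1 : ℤ) ((a.2 : ℤ) + 1) = w a := by
  have h1 := a.1.isLt
  have h2 := a.2.isLt
  unfold code
  rw [dif_pos (by omega)]
  congr 1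
  refine Prod.ext ?_ ?_ <;> apply Fin.ext <;> simp

lemma code_out (N : ℕ) (w : Fin N × Fin N → Bool) (i k : ℤ)
    (h : ¬(0 ≤ i ∧ i < (N : ℤ) ∧ 1 ≤ k ∧ k ≤ (N : ℤ))) : code N w i k = false := by
  unfold code; rw [dif_neg h]

/-- The configuration coding `w` below a red row at height 0, mirrored above,
with one extra black cell at `(-1, 1)`. -/
def xw (N : ℕ) (w : Fin N × Fin N → Bool) : Config Letter := fun p =>
  if p.2 = 0 then Letter.red
  else if p.2 < 0 then (if code N w p.1 (-p.2) then Letter.black else Letter.white)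
  else (if code N w p.1 p.2 = true ∨ p = ((-1 : ℤ), (1 : ℤ)) then Letter.black else Letter.white)

lemma xw_neg (N : ℕ) (w : Fin N × Fin N → Bool) (i k : ℤ) (hk : 1 ≤ k) :
    xw N w (i, -k) = (if code N w i k then Letter.black else Letter.white) := by
  unfold xw
  rw [if_neg (by dsimp only; omega), if_pos (by dsimp only; omega)]
  simp

lemma xw_pos (N : ℕ) (w : Fin N × Fin N → Bool) (i k : ℤ) (hk : 1 ≤ k) :
    xw N w (i, k) =
      (if code N w i k = true ∨ (i, k) = ((-1 : ℤ), (1 : ℤ)) then Letter.black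
       else Letter.white) := by
  unfold xw
  rw [if_neg (by dsimp only; omega), if_neg (by dsimp only; omega)]

lemma xw_red_iff (N : ℕ) (w : Fin N × Fin N → Bool) (i j : ℤ) :
    xw N w (i, j) = Letter.red ↔ j = 0 := by
  unfold xw
  dsimp only
  split_ifs <;> simp_all

lemma xw_mem (N : ℕ) (w : Fin N × Fin N → Bool) : xw N w ∈ semiMirrorShift' := by
  right
  refine ⟨0, fun i j => by simpa using xw_red_iff N w i j, ?_, ?_⟩
  · intro i k hk hb
    rw [show (0 : ℤ) - k = -k by ring, xw_neg N w i k hk] at hb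
    rw [show (0 : ℤ) + k = k by ring, xw_pos N w i k hk]
    by_cases hc : code N w i k
    · rw [if_pos (Or.inl hc)]
    · rw [if_neg hc] at hb; exact absurd hb (by simp)
  · intro q hq q' hq'
    have key : ∀ a : ℤ × ℤ,
        a ∈ {q : ℤ × ℤ | 1 ≤ q.2 ∧ xw N w (q.1, 0 - q.2) ≠ xw N w (q.1, 0 + q.2)} →
        a = ((-1 : ℤ), (1 : ℤ)) := by
      rintro ⟨a1, a2⟩ ⟨h1, h2⟩
      dsimp only at h1 h2
      rw [show (0 : ℤ) - a2 = -a2 by ring, xw_neg N w a1 a2 h1,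
        show (0 : ℤ) + a2 = a2 by ring, xw_pos N w a1 a2 h1] at h2
      by_cases hc : code N w a1 a2
      · rw [if_pos hc, if_pos (Or.inl hc)] at h2; exact absurd rfl h2
      · rw [if_neg hc] at h2
        by_cases hm : (a1, a2) = ((-1 : ℤ), (1 : ℤ))
        · exact hm
        · rw [if_neg (by simp [hc, hm])] at h2; exact absurd rfl h2
    rw [key q hq, key q' hq']

end SemiMirrorProof

namespace SemiMirrorProof

/-- The swap region: the box `[-N,N] × [-N,-1]`. -/
def inR (N : ℕ) (p : Cell) : Prop :=
  -(N : ℤ) ≤ p.1 ∧ p.1 ≤ (N : ℤ) ∧ -(N : ℤ) ≤ p.2 ∧ p.2 ≤ -1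

instance (N : ℕ) (p : Cell) : Decidable (inR N p) := by unfold inR; infer_instance

/-- The hybrid configuration: `xw N w` inside the region, `xw N w'` outside. -/
def hyb (N : ℕ) (w w' : Fin N × Fin N → Bool) : Config Letter := fun p =>
  if inR N p then xw N w p else xw N w' p

lemma hyb_not_mem (N : ℕ) (hN : 1 ≤ N) (w w' : Fin N × Fin N → Bool)
    (a : Fin N × Fin N) (ha : w a ≠ w' a) : hyb N w w' ∉ semiMirrorShift' := by
  have hNZ : (1 : ℤ) ≤ (N : ℤ) := by exact_mod_cast hN
  have h00 : hyb N w w' ((0 : ℤ), (0 : ℤ)) = Letter.red := by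
    unfold hyb
    rw [if_neg (by unfold inR; dsimp only; omega)]
    unfold xw; rw [if_pos rfl]
  rintro (h | ⟨j0, hred, -, hsub⟩)
  · exact h _ h00
  · have hj0 : j0 = 0 := ((hred 0 0).mp h00).symm
    subst hj0
    have ha1 := a.1.isLt
    have ha2 := a.2.isLt
    -- first mismatch: at column -1, depth 1
    have hq1 : ((-1 : ℤ), (1 : ℤ)) ∈
        {q : ℤ × ℤ | 1 ≤ q.2 ∧ hyb N w w' (q.1, 0 - q.2) ≠ hyb N w w' (q.1, 0 + q.2)} := by
      refine ⟨le_refl 1, ?_⟩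
      have hlow : hyb N w w' ((-1 : ℤ), (0 : ℤ) - 1) = Letter.white := by
        unfold hyb
        rw [if_pos (by unfold inR; dsimp only; omega)]
        rw [show ((0:ℤ) - 1) = -1 by ring, xw_neg N w (-1) 1 le_rfl,
          code_out N w (-1) 1 (by omega)]
        simp
      have hhigh : hyb N w w' ((-1 : ℤ), (0 : ℤ) + 1) = Letter.black := by
        unfold hyb
        rw [if_neg (by unfold inR; dsimp only; omega)]
        rw [show ((0:ℤ) + 1) = (1:ℤ) by ring, xw_pos N w' (-1) 1 le_rfl,
          if_pos (Or.inr rfl)]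
      rw [hlow, hhigh]; simp
    -- second mismatch: at the coordinate where w and w' differ
    have hq2 : (((a.1 : ℤ)), ((a.2 : ℤ) + 1)) ∈
        {q : ℤ × ℤ | 1 ≤ q.2 ∧ hyb N w w' (q.1, 0 - q.2) ≠ hyb N w w' (q.1, 0 + q.2)} := by
      refine ⟨by dsimp only; omega, ?_⟩
      have hlow : hyb N w w' ((a.1 : ℤ), (0 : ℤ) - ((a.2 : ℤ) + 1)) =
          (if w a then Letter.black else Letter.white) := by
        unfold hyb
        rw [if_pos (by unfold inR; dsimp only; omega)]
        rw [show (0:ℤ) - ((a.2 : ℤ) + 1) = -((a.2 : ℤ) + 1) by ring,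
          xw_neg N w (a.1 : ℤ) ((a.2 : ℤ) + 1) (by omega), code_spec N w a]
      have hhigh : hyb N w w' ((a.1 : ℤ), (0 : ℤ) + ((a.2 : ℤ) + 1)) =
          (if w' a then Letter.black else Letter.white) := by
        unfold hyb
        rw [if_neg (by unfold inR; dsimp only; omega)]
        rw [show (0:ℤ) + ((a.2 : ℤ) + 1) = (a.2 : ℤ) + 1 by ring,
          xw_pos N w' (a.1 : ℤ) ((a.2 : ℤ) + 1) (by omega), code_spec N w' a]
        rw [if_congr (show (w' a = true ∨ ((a.1:ℤ), (a.2:ℤ)+1) = ((-1:ℤ),(1:ℤ))) ↔ (w' a = true) from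
          or_iff_left (by intro hc; have := congrArg Prod.fst hc; dsimp at this; omega)) rfl rfl]
      rw [hlow, hhigh]
      cases hwa : w a <;> cases hwb : w' a <;> simp_all
    have := hsub hq1 hq2
    have := congrArg Prod.fst this
    dsimp at this
    omega

end SemiMirrorProof

namespace SemiMirrorProof

theorem not_sofic : ¬ IsSofic semiMirrorShift' := by
  classical
  rintro ⟨A', instA', S', π, ⟨F, hFfin, rfl⟩, hS⟩
  -- a bound on the diameter of the forbidden patterns
  set r : ℕ := hFfin.toFinset.sup
      (fun P => 2 * P.supp.sup (fun p => p.1.natAbs ⊔ p.2.natAbs)) with hr_def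
  have hr : ∀ P ∈ F, ∀ p ∈ P.supp, ∀ q ∈ P.supp,
      (p.1 - q.1).natAbs ≤ r ∧ (p.2 - q.2).natAbs ≤ r := by
    intro P hP p hp q hq
    have hPle := Finset.le_sup
      (f := fun P : Pattern A' => 2 * P.supp.sup (fun p => p.1.natAbs ⊔ p.2.natAbs))
      (hFfin.mem_toFinset.mpr hP)
    rw [← hr_def] at hPle
    have hPle2 : 2 * P.supp.sup (fun p => p.1.natAbs ⊔ p.2.natAbs) ≤ r := hPle
    have h1 : p.1.natAbs ⊔ p.2.natAbs ≤ P.supp.sup (fun p => p.1.natAbs ⊔ p.2.natAbs) :=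
      Finset.le_sup (f := fun p : Cell => p.1.natAbs ⊔ p.2.natAbs) hp
    have h2 : q.1.natAbs ⊔ q.2.natAbs ≤ P.supp.sup (fun p => p.1.natAbs ⊔ p.2.natAbs) :=
      Finset.le_sup (f := fun p : Cell => p.1.natAbs ⊔ p.2.natAbs) hq
    have h1a := le_trans le_sup_left h1
    have h1b := le_trans le_sup_right h1
    have h2a := le_trans le_sup_left h2
    have h2b := le_trans le_sup_right h2
    omega
  set m := Fintype.card A' with hm
  set K : ℕ := 4*r*r + 10*r + 3 with hK
  set N : ℕ := (m+2)*K + 1 with hN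
  have hN1 : 1 ≤ N := by omega
  -- the annulus around the swap region
  set Tbox : Finset Cell :=
    (Finset.Icc (-((N:ℤ)+(r:ℤ))) ((N:ℤ)+(r:ℤ))) ×ˢ (Finset.Icc (-((N:ℤ)+(r:ℤ))) (r:ℤ))
    with hTbox
  set Rbox : Finset Cell :=
    (Finset.Icc (-(N:ℤ)) (N:ℤ)) ×ˢ (Finset.Icc (-(N:ℤ)) (-1:ℤ)) with hRbox
  set T : Finset Cell := Tbox.filter (fun p => ¬ inR N p) with hT
  have hmemT : ∀ p : Cell, p ∈ T ↔
      ((-((N:ℤ)+(r:ℤ)) ≤ p.1 ∧ p.1 ≤ (N:ℤ)+(r:ℤ) ∧ -((N:ℤ)+(r:ℤ)) ≤ p.2 ∧ p.2 ≤ (r:ℤ))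
        ∧ ¬ inR N p) := by
    intro p
    simp [hT, hTbox, Finset.mem_filter, Finset.mem_product, Finset.mem_Icc, and_assoc]
  have hfil : Tbox.filter (fun p => inR N p) = Rbox := by
    ext p
    simp only [hTbox, hRbox, Finset.mem_filter, Finset.mem_product, Finset.mem_Icc, inR]
    omega
  have hsplit := Finset.card_filter_add_card_filter_not
    (s := Tbox) (p := fun p => inR N p)
  have hcardTbox : Tbox.card = (2*N+2*r+1) * (N+2*r+1) := by
    rw [hTbox, Finset.card_product, Int.card_Icc, Int.card_Icc]
    have e1 : ((N:ℤ)+(r:ℤ) + 1 - (-((N:ℤ)+(r:ℤ)))).toNat = 2*N+2*r+1 := by omega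
    have e2 : ((r:ℤ) + 1 - (-((N:ℤ)+(r:ℤ)))).toNat = N+2*r+1 := by omega
    rw [e1, e2]
  have hcardRbox : Rbox.card = (2*N+1) * N := by
    rw [hRbox, Finset.card_product, Int.card_Icc, Int.card_Icc]
    have e1 : ((N:ℤ) + 1 - (-(N:ℤ))).toNat = 2*N+1 := by omega
    have e2 : ((-1:ℤ) + 1 - (-(N:ℤ))).toNat = N := by omega
    rw [e1, e2]
  have hexp : (2*N+2*r+1) * (N+2*r+1) = (2*N+1)*N + (6*N*r + 2*N + 4*r*r + 4*r + 1) := by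
    ring
  have hTc : T.card = 6*N*r + 2*N + 4*r*r + 4*r + 1 := by
    rw [hT]
    rw [hfil, hcardRbox, hcardTbox] at hsplit
    omega
  have hTlt : (m+2) * T.card < N * N := by
    have key : N*N = (m+2) * (6*N*r + 2*N + 4*r*r + 4*r + 1) +
        (19 + 108*r + 232*(r*r) + 224*(r*r*r) + 64*(r*r*r*r)
          + m*15 + 98*(m*r) + 228*(m*(r*r)) + 224*(m*(r*r*r)) + 64*(m*(r*r*r*r))
          + 3*(m*m) + 22*(m*m*r) + 56*(m*m*(r*r)) + 56*(m*m*(r*r*r))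
          + 16*(m*m*(r*r*r*r))) := by
      rw [hN, hK]; ring
    rw [hTc, key]
    omega
  -- pigeonhole
  have hcards : Fintype.card ({p // p ∈ T} → A') < Fintype.card (Fin N × Fin N → Bool) := by
    rw [Fintype.card_fun, Fintype.card_fun, Fintype.card_coe, Fintype.card_bool,
      Fintype.card_prod, Fintype.card_fin]
    calc Fintype.card A' ^ T.card
        ≤ (2^(m+2)) ^ T.card := by
          apply Nat.pow_le_pow_left
          exact le_trans (Nat.lt_two_pow_self (n := m)).le (Nat.pow_le_pow_right (by norm_num) (by omega))
      _ = 2 ^ ((m+2) * T.card) := by rw [← pow_mul]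
      _ < 2 ^ (N*N) := Nat.pow_lt_pow_right one_lt_two hTlt
  have hx : ∀ w : Fin N × Fin N → Bool, xw N w ∈ (fun y => π ∘ y) '' shiftOf F := by
    intro w; rw [← hS]; exact xw_mem N w
  choose y hy1 hy2 using hx
  obtain ⟨w, w', hne, heq⟩ := Fintype.exists_ne_map_eq_of_card_lt
    (fun w (t : {p // p ∈ T}) => y w (t : Cell)) hcards
  have hagree : ∀ p : Cell, p ∈ T → y w p = y w' p := fun p hp => congrFun heq ⟨p, hp⟩
  set z : Config A' := fun p => if inR N p then y w p else y w' p with hz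
  have hzF : z ∈ shiftOf F := by
    intro P hP hocc
    obtain ⟨u, hu⟩ := hocc
    by_cases hcase : ∃ i : P.supp, inR N ((i : Cell) + u)
    · obtain ⟨i0, hi0⟩ := hcase
      refine hy1 w P hP ⟨u, fun i => ?_⟩
      rw [← hu i]
      by_cases hiR : inR N ((i : Cell) + u)
      · rw [hz]; simp only; rw [if_pos hiR]
      · have hmem : ((i : Cell) + u) ∈ T := by
          rw [hmemT]
          refine ⟨?_, hiR⟩
          have hd := hr P hP (i : Cell) i.2 (i0 : Cell) i0.2
          have e1 : ((i : Cell) + u).1 = (i : Cell).1 + u.1 := rfl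
          have e2 : ((i : Cell) + u).2 = (i : Cell).2 + u.2 := rfl
          have e3 : ((i0 : Cell) + u).1 = (i0 : Cell).1 + u.1 := rfl
          have e4 : ((i0 : Cell) + u).2 = (i0 : Cell).2 + u.2 := rfl
          unfold inR at hi0
          omega
        rw [hz]; simp only; rw [if_neg hiR]
        exact hagree _ hmem
    · push_neg at hcase
      refine hy1 w' P hP ⟨u, fun i => ?_⟩
      rw [← hu i, hz]; simp only; rw [if_neg (hcase i)]
  have hmem' : π ∘ z ∈ semiMirrorShift' := by rw [hS]; exact ⟨z, hzF, rfl⟩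
  have hzh : π ∘ z = hyb N w w' := by
    funext p
    simp only [Function.comp, hz, hyb]
    split_ifs with h
    · exact congrFun (hy2 w) p
    · exact congrFun (hy2 w') p
  obtain ⟨a, ha⟩ := Function.ne_iff.mp hne
  exact hyb_not_mem N hN1 w w' a ha (hzh ▸ hmem')

end SemiMirrorProof

/-- The shift `S'_semi-mirror` is not sofic. -/
theorem semiMirrorShift'_not_sofic : ¬ IsSofic semiMirrorShift' :=
  SemiMirrorProof.not_sofic
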